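/- arXiv:2205.01539 — 5 statements merged into one kernel-verified Lean document; each statement's English description precedes it below -/
import Mathlib

section
/- Let (M,d) be a metric space, X ⊆ M a subset, and σ ⊆ X a nonempty finite subset with diam(σ) = r. Fix any x₀ ∈ σ. Then every y ∈ X̄(σ) satisfies d(y, x₀) ≤ 2r. Consequently, the Vietoris–Rips complex R(X̄(σ); 2r) is a cone with apex x₀: x₀ ∈ X̄(σ), and for every nonempty finite τ ⊆ X̄(σ) with τ ∈ R(X̄(σ); 2r), also τ ∪ {x₀} ∈ R(X̄(σ); 2r). -/
/-- The Vietoris–Rips complex of a subset `X` at scale `r`. -/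
def VRips {M : Type*} [PseudoMetricSpace M] (X : Set M) (r : ℝ) : Set (Finset M) :=
  {σ | σ.Nonempty ∧ ↑σ ⊆ X ∧ ∀ x ∈ σ, ∀ y ∈ σ, dist x y ≤ r}

/-- The witness set `X(S)` of a finite set `S`: points of `X` within distance `diam S`
of every point of `S`. -/
def witnessSet {M : Type*} [MetricSpace M] (X : Set M) (S : Finset M) : Set M :=
  {y ∈ X | ∀ x ∈ S, dist y x ≤ Metric.diam (S : Set M)}

/-- `X̄(σ)`: the union of the witness sets of all nonempty subsets of `σ`. -/
def witnessUnion {M : Type*} [MetricSpace M] (X : Set M) (σ : Finset M) : Set M :=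
  ⋃ S ∈ {S : Finset M | S.Nonempty ∧ S ⊆ σ}, witnessSet X S

/-- Every point of `X̄(σ)` is within distance `2r` of any fixed vertex `x₀ ∈ σ`, where
`r = diam σ`; consequently the Rips complex `R(X̄(σ); 2r)` is a cone with apex `x₀`. -/
theorem witnessUnion_cone {M : Type*} [MetricSpace M] [DecidableEq M] (X : Set M) (σ : Finset M)
    (hσ : σ.Nonempty) (hσX : ↑σ ⊆ X) (r : ℝ) (hdiam : Metric.diam (σ : Set M) = r)
    (x₀ : M) (hx₀ : x₀ ∈ σ) :
    (∀ y ∈ witnessUnion X σ, dist y x₀ ≤ 2 * r) ∧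
    x₀ ∈ witnessUnion X σ ∧
    ∀ τ : Finset M, τ.Nonempty → ↑τ ⊆ witnessUnion X σ →
      τ ∈ VRips (witnessUnion X σ) (2 * r) →
      insert x₀ τ ∈ VRips (witnessUnion X σ) (2 * r) := by
  have hr0 : 0 ≤ r := hdiam ▸ Metric.diam_nonneg
  have key : ∀ y ∈ witnessUnion X σ, dist y x₀ ≤ 2 * r := by
    intro y hy
    simp only [witnessUnion, Set.mem_iUnion] at hy
    obtain ⟨S, ⟨hSne, hSσ⟩, hyX, hyS⟩ := hy
    obtain ⟨s, hs⟩ := hSne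
    have hdS : Metric.diam (S : Set M) ≤ r := by
      rw [← hdiam]
      exact Metric.diam_mono (by exact_mod_cast hSσ) (σ.finite_toSet.isBounded)
    calc dist y x₀ ≤ dist y s + dist s x₀ := dist_triangle _ _ _
      _ ≤ r + r := add_le_add ((hyS s hs).trans hdS)
          (hdiam ▸ Metric.dist_le_diam_of_mem (σ.finite_toSet.isBounded)
            (by exact_mod_cast hSσ hs) (by exact_mod_cast hx₀))
      _ = 2 * r := by ring
  have hx₀mem : x₀ ∈ witnessUnion X σ := by
    simp only [witnessUnion, Set.mem_iUnion]
    exact ⟨σ, ⟨hσ, le_refl _⟩, hσX (by exact_mod_cast hx₀),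
      fun x hx => Metric.dist_le_diam_of_mem (σ.finite_toSet.isBounded)
        (by exact_mod_cast hx₀) (by exact_mod_cast hx)⟩
  refine ⟨key, hx₀mem, fun τ hτne hτsub hτ => ?_⟩
  obtain ⟨-, -, hd⟩ := hτ
  refine ⟨⟨x₀, Finset.mem_insert_self _ _⟩, ?_, ?_⟩
  · intro z hz
    rcases Finset.mem_insert.1 (by exact_mod_cast hz) with h | h
    · exact h ▸ hx₀mem
    · exact hτsub h
  · intro x hx y hy
    rcases Finset.mem_insert.1 hx with hx | hx
    · rcases Finset.mem_insert.1 hy with hy | hy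
      · rw [hx, hy]; simpa using by positivity
      · rw [hx, dist_comm]; exact key y (hτsub hy)
    · rcases Finset.mem_insert.1 hy with hy | hy
      · rw [hy]; exact key x (hτsub hx)
      · exact hd x hx y hy
end

section
/- Let (M,d) be a metric space, X ⊆ M a subset, and σ ⊆ X a nonempty finite subset with diam(σ) = r. Then any two points y, y' ∈ X̄(σ) satisfy d(y, y') ≤ 3r. Consequently, for every subset V ⊆ X̄(σ), every nonempty finite subset of V belongs to the Vietoris–Rips complex R(V; 3r); that is, R(V; 3r) is the full simplex on V. -/
/-- Any two points of `X̄(σ)` are within distance `3r`, where `r = diam σ`; hence for any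
`V ⊆ X̄(σ)`, the Rips complex `R(V; 3r)` is the full simplex on `V`. -/
theorem witnessUnion_full_simplex {M : Type*} [MetricSpace M] (X : Set M) (σ : Finset M)
    (hσ : σ.Nonempty) (hσX : ↑σ ⊆ X) (r : ℝ) (hdiam : Metric.diam (σ : Set M) = r) :
    (∀ y ∈ witnessUnion X σ, ∀ y' ∈ witnessUnion X σ, dist y y' ≤ 3 * r) ∧
    ∀ V : Set M, V ⊆ witnessUnion X σ →
      ∀ τ : Finset M, τ.Nonempty → ↑τ ⊆ V → τ ∈ VRips V (3 * r) := by
  have key : ∀ y ∈ witnessUnion X σ, ∀ y' ∈ witnessUnion X σ, dist y y' ≤ 3 * r := by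
    intro y hy y' hy'
    simp only [witnessUnion, Set.mem_iUnion] at hy hy'
    obtain ⟨S, ⟨hS, hSσ⟩, hyX, hyd⟩ := hy
    obtain ⟨S', ⟨hS', hS'σ⟩, hy'X, hy'd⟩ := hy'
    obtain ⟨x, hx⟩ := hS
    obtain ⟨x', hx'⟩ := hS'
    have hdS : Metric.diam (S : Set M) ≤ r := by
      rw [← hdiam]
      exact Metric.diam_mono (by exact_mod_cast hSσ) (σ.finite_toSet.isBounded)
    have hdS' : Metric.diam (S' : Set M) ≤ r := by
      rw [← hdiam]
      exact Metric.diam_mono (by exact_mod_cast hS'σ) (σ.finite_toSet.isBounded)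
    have h1 : dist y x ≤ r := le_trans (hyd x hx) hdS
    have h2 : dist y' x' ≤ r := le_trans (hy'd x' hx') hdS'
    have h3 : dist x x' ≤ r := by
      rw [← hdiam]
      exact Metric.dist_le_diam_of_mem (σ.finite_toSet.isBounded)
        (by exact_mod_cast hSσ hx) (by exact_mod_cast hS'σ hx')
    calc dist y y' ≤ dist y x + dist x x' + dist x' y' := dist_triangle4 _ _ _ _
      _ ≤ r + r + r := by rw [dist_comm x' y']; linarith
      _ = 3 * r := by ring
  refine ⟨key, fun V hV τ hτ hτV => ⟨hτ, hτV, fun a ha b hb => ?_⟩⟩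
  exact key a (hV (hτV ha)) b (hV (hτV hb))
end

section
/- Let (M,d) be a metric space, X ⊆ M a subset, σ ⊆ X a nonempty finite subset with diam(σ) = r, and V ⊆ X̄(σ) a subset containing a point y with d(y,x) ≤ r for all x ∈ σ (i.e. y ∈ X(σ) ∩ V). Then every y' ∈ V satisfies d(y, y') ≤ 2r. Consequently, the Vietoris–Rips complex R(V; 2r) is a cone with apex y: for every nonempty finite τ ⊆ V with τ ∈ R(V; 2r), also τ ∪ {y} ∈ R(V; 2r). -/
/-- If `V ⊆ X̄(σ)` contains a point `y` within distance `r = diam σ` of every point of `σ`,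
then every point of `V` is within `2r` of `y`; hence `R(V; 2r)` is a cone with apex `y`. -/
theorem witnessUnion_restricted_cone {M : Type*} [MetricSpace M] [DecidableEq M] (X : Set M) (σ : Finset M)
    (hσ : σ.Nonempty) (hσX : ↑σ ⊆ X) (r : ℝ) (hdiam : Metric.diam (σ : Set M) = r)
    (V : Set M) (hV : V ⊆ witnessUnion X σ)
    (y : M) (hyV : y ∈ V) (hy : ∀ x ∈ σ, dist y x ≤ r) :
    (∀ y' ∈ V, dist y y' ≤ 2 * r) ∧
    ∀ τ : Finset M, τ.Nonempty → ↑τ ⊆ V → τ ∈ VRips V (2 * r) →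
      insert y τ ∈ VRips V (2 * r) := by
  have key : ∀ y' ∈ V, dist y y' ≤ 2 * r := by
    intro y' hy'V
    have := hV hy'V
    simp only [witnessUnion, witnessSet, Set.mem_iUnion, Set.mem_setOf_eq,
      Set.mem_sep_iff] at this
    obtain ⟨S, ⟨hSne, hSσ⟩, hy'X, hy'S⟩ := this
    obtain ⟨x, hxS⟩ := hSne
    have hdS : Metric.diam (S : Set M) ≤ r := by
      rw [← hdiam]
      exact Metric.diam_mono (by exact_mod_cast hSσ) (σ.finite_toSet.isBounded)
    have h1 : dist y x ≤ r := hy x (hSσ hxS)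
    have h2 : dist y' x ≤ r := (hy'S x hxS).trans hdS
    calc dist y y' ≤ dist y x + dist y' x := dist_triangle_right y y' x
      _ ≤ 2 * r := by linarith
  refine ⟨key, fun τ hτne hτV ⟨_, _, hτd⟩ => ?_⟩
  refine ⟨⟨y, Finset.mem_insert_self y τ⟩, ?_, ?_⟩
  · intro z hz
    rcases Finset.mem_insert.mp (by exact_mod_cast hz) with h | h
    · exact h ▸ hyV
    · exact hτV (Finset.mem_coe.mpr h)
  · intro a ha b hb
    rcases Finset.mem_insert.mp ha with h1 | h1
    · rcases Finset.mem_insert.mp hb with h2 | h2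
      · rw [h1, h2, dist_self]; 
        have := key y hyV
        nlinarith [dist_nonneg (x := y) (y := y)]
      · rw [h1]; exact key b (hτV (Finset.mem_coe.mpr h2))
    · rcases Finset.mem_insert.mp hb with h2 | h2
      · rw [h2, dist_comm]; exact key a (hτV (Finset.mem_coe.mpr h1))
      · exact hτd a h1 b h2
end

section
/- With the greedy landmark cover construction: let x_0, …, x_q ∈ X be points whose maximum pairwise distance equals r with r > 0. Then there exists a point ℓ ∈ ⋂_{j=0}^{q} U_{x_j} such that d(x_j, ℓ) ≤ c·r/(c−1) for all j = 0, …, q. -/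
/-- Sparse-witness proposition for the greedy landmark cover: given nested landmark sets
`{x₀} = L 0 ⊆ L 1 ⊆ ⋯ ⊆ L n = X` with cover sets
`U x = ⋃_{i=1}^{n} {ℓ ∈ L i | d(ℓ, x) ≤ c·d_H(L (i-1), X)}`, any points `x₀, …, x_q ∈ X`
with maximum pairwise distance `r > 0` admit a common witness `ℓ ∈ ⋂_j U (x j)` with
`d(x j, ℓ) ≤ c·r/(c-1)` for all `j`. -/
theorem sparse_witness {M : Type*} [MetricSpace M] (X : Set M) (hXfin : X.Finite)
    (x₀ : M) (hx₀ : x₀ ∈ X)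
    (n : ℕ) (hn : 0 < n) (L : ℕ → Set M)
    (hL0 : L 0 = {x₀}) (hmono : ∀ i, L i ⊆ L (i + 1)) (hLn : L n = X)
    (c : ℝ) (hc : 1 < c)
    (U : M → Set M)
    (hU : ∀ x, U x =
      ⋃ i ∈ Finset.Icc 1 n, {ℓ ∈ L i | dist ℓ x ≤ c * Metric.hausdorffDist (L (i - 1)) X})
    (q : ℕ) (x : Fin (q + 1) → M) (hx : ∀ j, x j ∈ X)
    (r : ℝ) (hr : 0 < r)
    (hle : ∀ i j, dist (x i) (x j) ≤ r) (heq : ∃ i j, dist (x i) (x j) = r) :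
    ∃ ℓ, (∀ j, ℓ ∈ U (x j)) ∧ ∀ j, dist (x j) ℓ ≤ c * r / (c - 1) := by
  have hc1 : (0:ℝ) < c - 1 := by linarith
  set T : ℝ := r / (c - 1) with hTdef
  have hT0 : 0 < T := div_pos hr hc1
  have hTc : T * (c - 1) = r := div_mul_cancel₀ r hc1.ne'
  have hcT : r + T = c * r / (c - 1) := by
    rw [eq_div_iff hc1.ne']
    linear_combination hTc
  -- monotonicity of L
  have hmono' : ∀ i j, i ≤ j → L i ⊆ L j := by
    intro i j hij
    induction hij with
    | refl => exact subset_rfl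
    | step h ih => exact ih.trans (hmono _)
  have hsub : ∀ i, i ≤ n → L i ⊆ X := fun i h => hLn ▸ hmono' i n h
  have hx₀L : ∀ i, x₀ ∈ L i := by
    intro i
    apply hmono' 0 i (Nat.zero_le i)
    rw [hL0]; exact Set.mem_singleton _
  have hne : ∀ i, (L i).Nonempty := fun i => ⟨x₀, hx₀L i⟩
  have hXb : Bornology.IsBounded X := hXfin.isBounded
  -- key: points of X are within hausdorffDist of L i
  have key : ∀ i, i ≤ n → ∀ y ∈ X, Metric.infDist y (L i) ≤ Metric.hausdorffDist (L i) X := by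
    intro i hi y hy
    rw [Metric.hausdorffDist_comm]
    apply Metric.infDist_le_hausdorffDist_of_mem hy
    rw [EMetric.hausdorffEdist_comm]
    exact Metric.hausdorffEdist_ne_top_of_nonempty_of_bounded (hne i) ⟨x₀, hx₀⟩
      (hXb.subset (hsub i hi)) hXb
  set μ : ℕ → ℝ := fun i => Metric.hausdorffDist (L (i - 1)) X with hμ
  set S : Finset ℕ := (Finset.Icc 1 n).filter (fun i => T ≤ μ i) with hS
  by_cases hSne : S.Nonempty
  · -- there is a level with μ i ≥ T; take the largest
    set i := S.max' hSne with hi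
    have hiS : i ∈ S := S.max'_mem hSne
    rw [hS, Finset.mem_filter, Finset.mem_Icc] at hiS
    obtain ⟨⟨hi1, hin⟩, hiT⟩ := hiS
    -- find ℓ ∈ L i close to x 0
    have hwit : ∃ ℓ ∈ L i, ∃ ν : ℝ, 0 ≤ ν ∧ ν < T ∧ dist (x 0) ℓ ≤ ν := by
      rcases eq_or_lt_of_le hin with heqn | hlt
      · refine ⟨x 0, ?_, 0, le_refl _, hT0, by simp⟩
        rw [heqn, hLn]; exact hx 0
      · -- i < n : use level i+1's Hausdorff distance
        have hi1n : i + 1 ∈ Finset.Icc 1 n := Finset.mem_Icc.mpr ⟨by omega, by omega⟩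
        have hνT : μ (i + 1) < T := by
          by_contra h
          push_neg at h
          have : i + 1 ∈ S := by
            rw [hS, Finset.mem_filter]; exact ⟨hi1n, h⟩
          have := S.le_max' _ this
          omega
        have hμeq : μ (i + 1) = Metric.hausdorffDist (L i) X := by
          simp [hμ]
        have hinf : Metric.infDist (x 0) (L i) ≤ μ (i + 1) := by
          rw [hμeq]; exact key i (le_of_lt hlt) (x 0) (hx 0)
        obtain ⟨ℓ, hℓL, hℓd⟩ :=
          ((hXfin.subset (hsub i (le_of_lt hlt))).isCompact).exists_infDist_eq_dist
            (hne i) (x 0)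
        refine ⟨ℓ, hℓL, μ (i + 1), ?_, hνT, ?_⟩
        · rw [hμeq]; exact Metric.hausdorffDist_nonneg
        · rw [← hℓd]; exact hinf
    obtain ⟨ℓ, hℓL, ν, hν0, hνT, hℓd⟩ := hwit
    have hdj : ∀ j, dist (x j) ℓ ≤ r + ν := by
      intro j
      calc dist (x j) ℓ ≤ dist (x j) (x 0) + dist (x 0) ℓ := dist_triangle _ _ _
        _ ≤ r + ν := add_le_add (hle j 0) hℓd
    refine ⟨ℓ, ?_, ?_⟩
    · intro j
      rw [hU (x j)]
      refine Set.mem_biUnion (Finset.mem_Icc.mpr ⟨hi1, hin⟩) ?_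
      refine ⟨hℓL, ?_⟩
      have : c * T ≤ c * μ i := by
        apply mul_le_mul_of_nonneg_left hiT (by linarith)
      rw [dist_comm]
      calc dist (x j) ℓ ≤ r + ν := hdj j
        _ ≤ r + T := by linarith
        _ = c * r / (c - 1) := hcT
        _ = c * T := by rw [hTdef]; ring
        _ ≤ c * μ i := this
    · intro j
      calc dist (x j) ℓ ≤ r + ν := hdj j
        _ ≤ r + T := by linarith
        _ = c * r / (c - 1) := hcT
  · -- all levels have μ i < T; use ℓ = x₀ at level 1
    have h1 : (1 : ℕ) ∈ Finset.Icc 1 n := Finset.mem_Icc.mpr ⟨le_refl _, hn⟩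
    have hμ1 : μ 1 < T := by
      by_contra h
      push_neg at h
      exact hSne ⟨1, by rw [hS, Finset.mem_filter]; exact ⟨h1, h⟩⟩
    have hdj : ∀ j, dist (x j) x₀ ≤ μ 1 := by
      intro j
      have := key 0 (Nat.zero_le n) (x j) (hx j)
      rw [hL0, Metric.infDist_singleton] at this
      simpa [hμ, hL0] using this
    refine ⟨x₀, ?_, ?_⟩
    · intro j
      rw [hU (x j)]
      refine Set.mem_biUnion h1 ?_
      refine ⟨hmono 0 (by rw [hL0]; exact Set.mem_singleton _), ?_⟩
      rw [dist_comm]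
      have hμ10 : 0 ≤ μ 1 := Metric.hausdorffDist_nonneg
      calc dist (x j) x₀ ≤ μ 1 := hdj j
        _ ≤ c * μ 1 := le_mul_of_one_le_left hμ10 (le_of_lt hc)
    · intro j
      have : T ≤ c * r / (c - 1) := by
        rw [← hcT]; linarith
      calc dist (x j) x₀ ≤ μ 1 := hdj j
        _ ≤ c * r / (c - 1) := by linarith
end

section
/- Let (M,d) be a metric space, X ⊆ M a subset, σ ⊆ X a nonempty finite subset with diam(σ) = r, and c > 1. Suppose f assigns to each nonempty subset τ ⊆ σ a point f(τ) ∈ M such that d(x, f(τ)) ≤ (c/(c−1))·diam(τ) for every x ∈ τ. Let ℓ = f(σ) and let C = σ ∪ { f(τ) : ∅ ≠ τ ⊆ σ }. Then every y ∈ C satisfies d(y, ℓ) ≤ (2c/(c−1))·r. Consequently, the Vietoris–Rips complex R(C; (2c/(c−1))·r) is a cone with apex ℓ: for every nonempty finite τ' ⊆ C with τ' ∈ R(C; (2c/(c−1))·r), also τ' ∪ {ℓ} ∈ R(C; (2c/(c−1))·r). -/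
/-- If `f` assigns to each nonempty face `τ ⊆ σ` a witness point `f τ` with
`d(x, f τ) ≤ (c/(c-1))·diam τ` for all `x ∈ τ`, then every point of
`C = σ ∪ {f τ : ∅ ≠ τ ⊆ σ}` is within `(2c/(c-1))·r` of `ℓ = f σ`, where `r = diam σ`;
consequently `R(C; (2c/(c-1))·r)` is a cone with apex `ℓ`. -/
theorem sparse_carrier_cone {M : Type*} [MetricSpace M] [DecidableEq M] (X : Set M) (σ : Finset M)
    (hσ : σ.Nonempty) (hσX : ↑σ ⊆ X)
    (r c : ℝ) (hc : 1 < c) (hdiam : Metric.diam (σ : Set M) = r)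
    (f : Finset M → M)
    (hf : ∀ τ : Finset M, τ.Nonempty → τ ⊆ σ →
      ∀ x ∈ τ, dist x (f τ) ≤ (c / (c - 1)) * Metric.diam (τ : Set M))
    (ℓ : M) (hℓ : ℓ = f σ)
    (C : Set M) (hC : C = ↑σ ∪ {y | ∃ τ : Finset M, τ.Nonempty ∧ τ ⊆ σ ∧ y = f τ}) :
    (∀ y ∈ C, dist y ℓ ≤ (2 * c / (c - 1)) * r) ∧
    ∀ τ' : Finset M, τ'.Nonempty → ↑τ' ⊆ C → τ' ∈ VRips C ((2 * c / (c - 1)) * r) →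
      insert ℓ τ' ∈ VRips C ((2 * c / (c - 1)) * r) := by
  have hc0 : (0:ℝ) < c - 1 := by linarith
  have hr0 : 0 ≤ r := hdiam ▸ Metric.diam_nonneg
  have hcc : 0 ≤ c / (c - 1) := by positivity
  have hbound0 : 0 ≤ (2 * c / (c - 1)) * r := by positivity
  have key : ∀ y ∈ C, dist y ℓ ≤ (2 * c / (c - 1)) * r := by
    intro y hy
    rw [hC] at hy
    have hσℓ : ∀ x ∈ σ, dist x ℓ ≤ (c / (c - 1)) * r := by
      intro x hx
      have := hf σ hσ (le_refl _) x hx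
      rw [hdiam] at this
      simpa [hℓ] using this
    rcases hy with hy | ⟨τ, hτne, hτσ, rfl⟩
    · calc dist y ℓ ≤ (c / (c - 1)) * r := hσℓ y hy
        _ ≤ (2 * c / (c - 1)) * r := by
            apply mul_le_mul_of_nonneg_right _ hr0
            rw [div_le_div_iff₀ hc0 hc0]; nlinarith
    · obtain ⟨x, hx⟩ := hτne
      have hdτ : Metric.diam (τ : Set M) ≤ r := by
        rw [← hdiam]
        exact Metric.diam_mono (by exact_mod_cast hτσ)
          ((σ : Set M).toFinite.isBounded)
      have h1 : dist (f τ) x ≤ (c / (c - 1)) * r := by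
        rw [dist_comm]
        calc dist x (f τ) ≤ (c / (c - 1)) * Metric.diam (τ : Set M) := hf τ ⟨x, hx⟩ hτσ x hx
          _ ≤ (c / (c - 1)) * r := mul_le_mul_of_nonneg_left hdτ hcc
      have h2 : dist x ℓ ≤ (c / (c - 1)) * r := hσℓ x (hτσ hx)
      calc dist (f τ) ℓ ≤ dist (f τ) x + dist x ℓ := dist_triangle _ _ _
        _ ≤ (c / (c - 1)) * r + (c / (c - 1)) * r := add_le_add h1 h2
        _ = (2 * c / (c - 1)) * r := by ring
  refine ⟨key, fun τ' hne hsub hmem => ?_⟩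
  have hℓC : ℓ ∈ C := by
    rw [hC]; right; exact ⟨σ, hσ, le_refl _, hℓ⟩
  obtain ⟨-, -, hpair⟩ := hmem
  refine ⟨⟨ℓ, Finset.mem_insert_self _ _⟩, ?_, ?_⟩
  · intro z hz
    rcases Finset.mem_insert.mp (by exact_mod_cast hz) with rfl | hz
    · exact hℓC
    · exact hsub hz
  · intro x hx y hy
    rw [Finset.mem_insert] at hx hy
    rcases hx with rfl | hx <;> rcases hy with rfl | hy
    · simpa using hbound0
    · rw [dist_comm]; exact key y (hsub hy)
    · exact key x (hsub hx)
    · exact hpair x hx y hy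
end
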